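/- One-dimensional weighted Hardy inequality: for α ≥ 0 and a smooth function f on [0, r₁], ∫₀^{r₁} |f|²/(1+x)^{α+2} dx ≤ (4/(α+1)²) ∫₀^{r₁} |f'|²/(1+x)^{α} dx + (2/(α+1)) |f(0)|². -/

import Mathlib

open intervalIntegral

private lemma hardy_amgm (c a b : ℝ) (hc : 0 < c) :
    2 * (a * b) ≤ c / 2 * a ^ 2 + 2 / c * b ^ 2 := by
  have h1 : c / 2 * a ^ 2 + 2 / c * b ^ 2 - 2 * (a * b) = (c * a - 2 * b) ^ 2 / (2 * c) := by
    field_simp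
    ring
  have h2 : 0 ≤ (c * a - 2 * b) ^ 2 / (2 * c) := by positivity
  linarith

theorem weighted_hardy_inequality (α r₁ : ℝ) (hα : 0 ≤ α) (hr₁ : 0 < r₁)
    (f : ℝ → ℝ) (hf : ContDiff ℝ 1 f) :
    (∫ x in (0:ℝ)..r₁, (f x) ^ 2 / (1 + x) ^ (α + 2)) ≤
      (4 / (α + 1) ^ 2) * (∫ x in (0:ℝ)..r₁, (deriv f x) ^ 2 / (1 + x) ^ α)
        + (2 / (α + 1)) * (f 0) ^ 2 := by
  have hc0 : (0:ℝ) < α + 1 := by linarith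
  have huIcc : Set.uIcc (0:ℝ) r₁ = Set.Icc 0 r₁ := Set.uIcc_of_le hr₁.le
  have hpos : ∀ x ∈ Set.Icc (0:ℝ) r₁, (0:ℝ) < 1 + x := fun x hx => by
    have := hx.1; linarith
  have hfd : Differentiable ℝ f := hf.differentiable one_ne_zero
  have hdc : Continuous (deriv f) := hf.continuous_deriv le_rfl
  set u : ℝ → ℝ := fun x => 2 * f x * deriv f x / (1 + x) ^ (α + 1) with hu_def
  set g : ℝ → ℝ := fun x => f x ^ 2 / (1 + x) ^ (α + 1) with hg_def
  -- continuity of the rpow weights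
  have hcpow : ∀ β : ℝ, ContinuousOn (fun x : ℝ => (1 + x) ^ β) (Set.uIcc 0 r₁) := by
    intro β
    apply ContinuousOn.rpow_const (continuous_const.add continuous_id).continuousOn
    intro x hx
    exact Or.inl (ne_of_gt (hpos x (huIcc ▸ hx)))
  have hpow_ne : ∀ β : ℝ, ∀ x ∈ Set.uIcc (0:ℝ) r₁, (1 + x) ^ β ≠ 0 := by
    intro β x hx
    exact ne_of_gt (Real.rpow_pos_of_pos (hpos x (huIcc ▸ hx)) β)
  -- integrability
  have hIA : IntervalIntegrable (fun x => f x ^ 2 / (1 + x) ^ (α + 2)) MeasureTheory.volume 0 r₁ :=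
    (((hf.continuous.pow 2).continuousOn).div (hcpow _) (hpow_ne _)).intervalIntegrable
  have hIB : IntervalIntegrable (fun x => deriv f x ^ 2 / (1 + x) ^ α) MeasureTheory.volume 0 r₁ :=
    (((hdc.pow 2).continuousOn).div (hcpow _) (hpow_ne _)).intervalIntegrable
  have hIu : IntervalIntegrable u MeasureTheory.volume 0 r₁ := by
    apply ContinuousOn.intervalIntegrable
    exact ((continuous_const.mul hf.continuous).mul hdc).continuousOn.div (hcpow _) (hpow_ne _)
  -- derivative of g
  have hderiv : ∀ x ∈ Set.uIcc (0:ℝ) r₁,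
      HasDerivAt g (u x - (α + 1) * (f x ^ 2 / (1 + x) ^ (α + 2))) x := by
    intro x hx
    have hx1 : (0:ℝ) < 1 + x := hpos x (huIcc ▸ hx)
    have h1 : HasDerivAt (fun y => f y ^ 2) (2 * f x * deriv f x) x := by
      simpa [pow_one, mul_comm, mul_assoc] using (hfd x).hasDerivAt.fun_pow 2
    have hb : HasDerivAt (fun y : ℝ => 1 + y) 1 x := by
      simpa using (hasDerivAt_id x).const_add (1:ℝ)
    have h2 : HasDerivAt (fun y : ℝ => (1 + y) ^ (α + 1)) ((α + 1) * (1 + x) ^ α) x := by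
      have := (Real.hasDerivAt_rpow_const (x := 1 + x) (p := α + 1)
        (Or.inl (ne_of_gt hx1))).comp x hb
      simpa [add_sub_cancel_right, Function.comp_def] using this
    have hne : (1 + x) ^ (α + 1) ≠ 0 := ne_of_gt (Real.rpow_pos_of_pos hx1 _)
    have h3 := h1.div h2 hne
    have heq : (2 * f x * deriv f x * (1 + x) ^ (α + 1) - f x ^ 2 * ((α + 1) * (1 + x) ^ α)) /
        ((1 + x) ^ (α + 1)) ^ 2 = u x - (α + 1) * (f x ^ 2 / (1 + x) ^ (α + 2)) := by
      have e1 : (1 + x) ^ (α + 2) = (1 + x) ^ α * (1 + x) * (1 + x) := by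
        rw [show α + 2 = α + 1 + 1 by ring, Real.rpow_add_one (ne_of_gt hx1),
          Real.rpow_add_one (ne_of_gt hx1)]
      have e2 : (1 + x) ^ (α + 1) = (1 + x) ^ α * (1 + x) := Real.rpow_add_one (ne_of_gt hx1) α
      have hane : (1 + x) ^ α ≠ 0 := ne_of_gt (Real.rpow_pos_of_pos hx1 _)
      rw [hu_def]
      simp only []
      rw [e1, e2]
      field_simp
    exact heq ▸ h3
  -- FTC
  have hint : IntervalIntegrable (fun x => u x - (α + 1) * (f x ^ 2 / (1 + x) ^ (α + 2)))
      MeasureTheory.volume 0 r₁ := hIu.sub (hIA.const_mul _)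
  have hftc := intervalIntegral.integral_eq_sub_of_hasDerivAt hderiv hint
  rw [intervalIntegral.integral_sub hIu (hIA.const_mul _),
    intervalIntegral.integral_const_mul] at hftc
  have hg0 : g 0 = f 0 ^ 2 := by simp [hg_def]
  have hgr : 0 ≤ g r₁ := by
    have : (0:ℝ) < 1 + r₁ := by linarith
    rw [hg_def]
    positivity
  -- pointwise AM-GM bound
  have hpt : ∀ x ∈ Set.Icc (0:ℝ) r₁,
      u x ≤ (α + 1) / 2 * (f x ^ 2 / (1 + x) ^ (α + 2)) +
        2 / (α + 1) * (deriv f x ^ 2 / (1 + x) ^ α) := by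
    intro x hx
    have hx1 : (0:ℝ) < 1 + x := hpos x hx
    set s : ℝ := (1 + x) ^ ((α + 2) / 2) with hs_def
    set t : ℝ := (1 + x) ^ (α / 2) with ht_def
    have hs0 : 0 < s := Real.rpow_pos_of_pos hx1 _
    have ht0 : 0 < t := Real.rpow_pos_of_pos hx1 _
    have hs2 : s ^ 2 = (1 + x) ^ (α + 2) := by
      rw [hs_def, ← Real.rpow_natCast ((1 + x) ^ ((α + 2) / 2)) 2,
        ← Real.rpow_mul hx1.le]
      norm_num
    have ht2 : t ^ 2 = (1 + x) ^ α := by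
      rw [ht_def, ← Real.rpow_natCast ((1 + x) ^ (α / 2)) 2, ← Real.rpow_mul hx1.le]
      norm_num
    have hst : s * t = (1 + x) ^ (α + 1) := by
      rw [hs_def, ht_def, ← Real.rpow_add hx1]
      congr 1
      ring
    have hA : f x ^ 2 / (1 + x) ^ (α + 2) = (f x / s) ^ 2 := by
      rw [div_pow, hs2]
    have hB : deriv f x ^ 2 / (1 + x) ^ α = (deriv f x / t) ^ 2 := by
      rw [div_pow, ht2]
    have hU : u x = 2 * (f x / s * (deriv f x / t)) := by
      rw [hu_def]
      simp only []
      rw [div_mul_div_comm, hst]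
      ring
    rw [hA, hB, hU]
    exact hardy_amgm (α + 1) _ _ hc0
  have hmono := intervalIntegral.integral_mono_on hr₁.le hIu
    ((hIA.const_mul _).add (hIB.const_mul _)) hpt
  rw [intervalIntegral.integral_add (hIA.const_mul _) (hIB.const_mul _),
    intervalIntegral.integral_const_mul, intervalIntegral.integral_const_mul] at hmono
  set I := ∫ x in (0:ℝ)..r₁, f x ^ 2 / (1 + x) ^ (α + 2) with hI
  set J := ∫ x in (0:ℝ)..r₁, deriv f x ^ 2 / (1 + x) ^ α with hJ
  have hkey : (α + 1) / 2 * I ≤ f 0 ^ 2 + 2 / (α + 1) * J := by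
    have : (∫ x in (0:ℝ)..r₁, u x) = g r₁ - g 0 + (α + 1) * I := by linarith
    linarith [hmono, hgr, hg0 ▸ this]
  have hmul := mul_le_mul_of_nonneg_left hkey (by positivity : (0:ℝ) ≤ 2 / (α + 1))
  have e3 : 2 / (α + 1) * ((α + 1) / 2 * I) = I := by field_simp
  have e4 : 2 / (α + 1) * (f 0 ^ 2 + 2 / (α + 1) * J) =
      2 / (α + 1) * f 0 ^ 2 + 4 / (α + 1) ^ 2 * J := by
    field_simp
    ring
  linarith
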